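/- Let X ⊆ ℝ² be a bounded convex set, let x ∈ X \ ∂X, and let y ∈ ∂X be a point of the boundary closest to x, i.e. ‖x − y‖ = dist(x, ∂X). Let l > ‖x − y‖. Then every point z ∈ X with ‖z − x‖ = l satisfies ⟨z − x, y − x⟩ ≤ ‖y − x‖², where ⟨·,·⟩ is the Euclidean inner product. (In other words, the open arc of the circle of radius l about x lying strictly beyond the tangent line at y contains no point of X.) -/
import Mathlib


open MeasureTheory Metric Set Real Pointwise
open scoped ENNReal RealInnerProductSpace

noncomputable section

/-- The Euclidean plane. -/
abbrev Plane := EuclideanSpace ℝ (Fin 2)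

/-- The unit vector in the plane making angle `θ` with the horizontal axis. -/
def needleDir (θ : ℝ) : Plane :=
  (EuclideanSpace.equiv (Fin 2) ℝ).symm ![Real.cos θ, Real.sin θ]

/-- The set of directions `θ ∈ [0, 2π)` for which the needle of length `l`
originating at `x` has its other endpoint in `X`. -/
def needleAngles (X : Set Plane) (l : ℝ) (x : Plane) : Set ℝ :=
  {θ ∈ Set.Ico 0 (2 * π) | x + l • needleDir θ ∈ X}

/-- The pointwise probability `p_X(x, l)` that a random needle of length `l` at `x`
lies within `X`. -/
def pointwiseProb (X : Set Plane) (x : Plane) (l : ℝ) : ℝ :=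
  (1 / (2 * π)) * (volume (needleAngles X l x)).toReal

/-- The Buffon probability `P_X(l)` that a random needle of length `l` originating at a
uniformly chosen point of `X` lies within `X`; taken to be `0` when `X` has zero area. -/
def buffonProb (X : Set Plane) (l : ℝ) : ℝ :=
  if volume X = 0 then 0
  else (1 / (2 * π * (volume X).toReal)) *
    ∫ x in X, (volume (needleAngles X l x)).toReal

/-- The interior parallel `X_r`: the Minkowski difference of `X` with the closed ball
of radius `r`. -/
def innerParallel (X : Set Plane) (r : ℝ) : Set Plane :=
  {x : Plane | Metric.closedBall x r ⊆ X}

/-- The exterior parallel `X^r`: the Minkowski sum of `X` with the closed ball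
of radius `r`. -/
def exterParallel (X : Set Plane) (r : ℝ) : Set Plane :=
  X + Metric.closedBall (0 : Plane) r

end

/-- points of `X` on the circle of radius `l` about `x` lie in the closed
half-plane bounded by the tangent line at a closest boundary point `y`. -/
theorem needle_endpoint_halfplane (X : Set Plane) (hXb : Bornology.IsBounded X)
    (hXc : Convex ℝ X) (x : Plane) (hx : x ∈ X \ frontier X) (y : Plane)
    (hy : y ∈ frontier X) (hmin : ‖x - y‖ = Metric.infDist x (frontier X))
    (l : ℝ) (hl : ‖x - y‖ < l) (z : Plane) (hz : z ∈ X) (hzl : ‖z - x‖ = l) :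
    ⟪z - x, y - x⟫ ≤ ‖y - x‖ ^ 2 := by
  by_contra hcon
  push_neg at hcon
  set v := y - x with hv
  set r := ‖x - y‖ with hr
  have hrv : ‖v‖ = r := by rw [hv, hr, norm_sub_rev]
  have hr0 : 0 ≤ r := norm_nonneg _
  have hxint : x ∈ interior X := by
    rcases hx with ⟨hxX, hxf⟩
    have : x ∈ closure X := subset_closure hxX
    simp only [frontier, mem_diff, this, true_and, not_not] at hxf
    exact hxf
  -- ball x r ⊆ interior X
  have hball : ball x r ⊆ interior X := by
    have hsub : ball x r ⊆ interior X ∪ (closure X)ᶜ := by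
      intro u hu
      by_contra h
      rw [Set.mem_union, not_or] at h
      have h2 : u ∈ closure X := not_not.1 (by simpa using h.2)
      have huf : u ∈ frontier X := ⟨h2, h.1⟩
      have : Metric.infDist x (frontier X) ≤ dist x u :=
        Metric.infDist_le_dist_of_mem huf
      rw [← hmin] at this
      rw [mem_ball, dist_comm] at hu
      exact absurd (lt_of_le_of_lt this hu) (lt_irrefl _)
    refine IsPreconnected.subset_left_of_subset_union isOpen_interior
      isClosed_closure.isOpen_compl ?_ hsub ?_ ?_
    · exact Disjoint.mono interior_subset_closure le_rfl disjoint_compl_right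
    · refine ⟨x, ?_, hxint⟩
      rw [mem_ball, dist_self]
      rcases lt_or_eq_of_le hr0 with h | h
      · exact h
      · exfalso
        have : x ∈ frontier X := by
          have : Metric.infDist x (frontier X) = 0 := by rw [← hmin, ← h]
          have hcl : x ∈ closure (frontier X) :=
            (Metric.mem_closure_iff_infDist_zero ⟨y, hy⟩).2 this
          rwa [IsClosed.closure_eq isClosed_frontier] at hcl
        exact hx.2 this
    · exact (convex_ball x r).isPreconnected
  set c := ⟪z - x, v⟫ with hc
  have hcr : r ^ 2 < c := by rwa [hrv] at hcon
  have hlr : r < l := hl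
  have hl2 : 0 < l ^ 2 - r ^ 2 := by nlinarith
  set s : ℝ := min (1/2) ((c - r ^ 2) / (l ^ 2 - r ^ 2)) with hs
  have hs0 : 0 < s := lt_min (by norm_num) (div_pos (by linarith) hl2)
  have hs1 : s < 1 := lt_of_le_of_lt (min_le_left _ _) (by norm_num)
  have hskey : s * (l ^ 2 - r ^ 2) < 2 * (c - r ^ 2) := by
    have : s ≤ (c - r ^ 2) / (l ^ 2 - r ^ 2) := min_le_right _ _
    have h2 : s * (l ^ 2 - r ^ 2) ≤ c - r ^ 2 := by
      rw [← div_mul_cancel₀ (c - r ^ 2) (ne_of_gt hl2)]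
      exact mul_le_mul_of_nonneg_right this (le_of_lt hl2)
    linarith
  set u : Plane := (1 - s)⁻¹ • (y - s • z) with hu
  have h1s : (0:ℝ) < 1 - s := by linarith
  have hux : u - x = (1 - s)⁻¹ • (v - s • (z - x)) := by
    rw [hu, hv]
    match_scalars <;> field_simp <;> ring
  have hnorm : ‖u - x‖ ^ 2 < r ^ 2 := by
    rw [hux, norm_smul, mul_pow, norm_inv, Real.norm_eq_abs, abs_of_pos h1s]
    have hexp : ‖v - s • (z - x)‖ ^ 2 = r ^ 2 - 2 * (s * c) + s ^ 2 * l ^ 2 := by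
      rw [← real_inner_self_eq_norm_sq]
      rw [inner_sub_sub_self]
      rw [real_inner_smul_left, real_inner_smul_right, real_inner_smul_left,
        real_inner_smul_right]
      rw [real_inner_self_eq_norm_sq, real_inner_self_eq_norm_sq, hrv, hzl]
      linear_combination s * (hc.trans (real_inner_comm v (z - x)))
    rw [hexp]
    rw [inv_pow, inv_mul_lt_iff₀ (by positivity)]
    nlinarith
  have humem : u ∈ interior X := hball (by
    rw [mem_ball, dist_eq_norm]
    have := hnorm
    nlinarith [norm_nonneg (u - x), hr0, sq_abs (‖u - x‖)])
  have hcombo : (1 - s) • u + s • z = y := by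
    rw [hu, smul_smul, mul_inv_cancel₀ (ne_of_gt h1s), one_smul]
    abel
  have : y ∈ interior X :=
    hcombo ▸ hXc.combo_interior_self_mem_interior humem hz h1s (le_of_lt hs0) (by ring)
  exact hy.2 this
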